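/- The number of pairs (z1, z2) \in (\mathbb{C}^\times)^2 satisfying z1^{T1} = z2^{T2} as elements of (\mathbb{C}^\times)^2, for two nonzero non-parallel vectors T1, T2 \in \mathbb{Z}^2 (where z^{(a,b)} := (z^a, z^b)), is exactly |det(T1, T2)|; consequently the number of distinct common values g = z1^{T1} = z2^{T2} is |det(T1,T2)|/(\ell(T1) \ell(T2)) where \ell(T) is the gcd of the coordinates of T. -/

import Mathlib

open Polynomial

/-- For `T = (a,b) ∈ ℤ²` and `z ∈ ℂ`, the pair `z^T = (z^a, z^b)`. -/
noncomputable def zpowVec (z : ℂ) (T : ℤ × ℤ) : ℂ × ℂ := (z ^ T.1, z ^ T.2)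

namespace MikhalkinAux

/-- The set of solutions of `w^n = t` is a finset of cardinality `n`, for `t ≠ 0`. -/
lemma natpow_finset (n : ℕ) (hn : n ≠ 0) (t : ℂ) (ht : t ≠ 0) :
    ∃ s : Finset ℂ, ↑s = {w : ℂ | w ^ n = t} ∧ s.card = n := by
  obtain ⟨r, hr⟩ := IsAlgClosed.exists_pow_nat_eq t (Nat.pos_of_ne_zero hn)
  have hr0 : r ≠ 0 := by
    rintro rfl
    rw [zero_pow hn] at hr
    exact ht hr.symm
  refine ⟨(nthRootsFinset n (1 : ℂ)).image (r * ·), ?_, ?_⟩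
  · ext w
    simp only [Finset.coe_image, Set.mem_image, Finset.mem_coe,
      mem_nthRootsFinset (Nat.pos_of_ne_zero hn) (1 : ℂ), Set.mem_setOf_eq]
    constructor
    · rintro ⟨u, hu, rfl⟩
      rw [mul_pow, hu, mul_one, hr]
    · intro hw
      refine ⟨w / r, ?_, by field_simp⟩
      rw [div_pow, hw, hr, div_self ht]
  · rw [Finset.card_image_of_injective _ (mul_right_injective₀ hr0),
      (Complex.isPrimitiveRoot_exp n hn).card_nthRootsFinset]

/-- The set of solutions of `w^d = t` (integer exponent) is a finset of cardinality
`|d|`, for `t ≠ 0`, `d ≠ 0`. -/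
lemma zpow_finset (d : ℤ) (hd : d ≠ 0) (t : ℂ) (ht : t ≠ 0) :
    ∃ s : Finset ℂ, ↑s = {w : ℂ | w ^ d = t} ∧ s.card = d.natAbs := by
  have hn : d.natAbs ≠ 0 := Int.natAbs_ne_zero.mpr hd
  rcases Int.natAbs_eq d with h | h
  · obtain ⟨s, hs, hc⟩ := natpow_finset d.natAbs hn t ht
    refine ⟨s, ?_, hc⟩
    rw [hs]
    ext w
    simp only [Set.mem_setOf_eq]
    have e : w ^ d = w ^ d.natAbs := by rw [← zpow_natCast, ← h]
    rw [e]
  · obtain ⟨s, hs, hc⟩ := natpow_finset d.natAbs hn t⁻¹ (inv_ne_zero ht)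
    refine ⟨s, ?_, hc⟩
    rw [hs]
    ext w
    simp only [Set.mem_setOf_eq]
    have e : w ^ d = (w ^ d.natAbs)⁻¹ := by rw [← zpow_natCast, ← zpow_neg, ← h]
    rw [e, inv_eq_iff_eq_inv]

lemma ne_zero_of_zpow_eq {w : ℂ} {d : ℤ} {t : ℂ} (hd : d ≠ 0) (ht : t ≠ 0)
    (h : w ^ d = t) : w ≠ 0 := by
  rintro rfl
  rw [zero_zpow d hd] at h
  exact ht h.symm

/-- The solution set of the pair of "binomial" equations given by the matrix
`(a b; c d)`. -/
def Sol (a b c d : ℤ) : Set (ℂ × ℂ) :=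
  {p | p.1 ≠ 0 ∧ p.2 ≠ 0 ∧ p.1 ^ a * p.2 ^ b = 1 ∧ p.1 ^ c * p.2 ^ d = 1}

lemma sol_swap (a b c d : ℤ) : Sol b a d c = Prod.swap '' Sol a b c d := by
  rw [Set.image_swap_eq_preimage_swap]
  ext ⟨z, w⟩
  simp only [Sol, Set.mem_setOf_eq, Set.mem_preimage, Prod.swap_prod_mk]
  constructor <;> rintro ⟨h1, h2, h3, h4⟩ <;>
    exact ⟨h2, h1, by rw [mul_comm]; exact h3, by rw [mul_comm]; exact h4⟩

lemma shear_key (u v : ℂ) (hv : v ≠ 0) (a b q : ℤ) :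
    (u * v ^ q) ^ a * v ^ (b - q * a) = u ^ a * v ^ b := by
  rw [mul_zpow, ← zpow_mul, mul_assoc, ← zpow_add₀ hv]
  congr 2
  ring

lemma sol_shear (a b c d q : ℤ) :
    Sol a (b - q * a) c (d - q * c)
      = (fun p : ℂ × ℂ => (p.1 * p.2 ^ q, p.2)) '' Sol a b c d := by
  ext ⟨u, v⟩
  constructor
  · rintro ⟨hu, hv, h1, h2⟩
    refine ⟨(u * v ^ (-q), v), ⟨mul_ne_zero hu (zpow_ne_zero _ hv), hv, ?_, ?_⟩, ?_⟩
    · have e : b = (b - q * a) - (-q) * a := by ring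
      rw [e, shear_key u v hv a (b - q*a) (-q)]
      exact h1
    · have e : d = (d - q * c) - (-q) * c := by ring
      rw [e, shear_key u v hv c (d - q*c) (-q)]
      exact h2
    · simp only
      rw [mul_assoc, ← zpow_add₀ hv, neg_add_cancel, zpow_zero, mul_one]
  · rintro ⟨⟨z, w⟩, ⟨hz, hw, h1, h2⟩, heq⟩
    obtain ⟨rfl, rfl⟩ : w = v ∧ z * w ^ q = u := by
      have := heq
      simp only [Prod.ext_iff] at this
      exact ⟨this.2, this.1⟩
    exact ⟨mul_ne_zero hz (zpow_ne_zero _ hw), hw,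
      by rw [shear_key z w hw a b q]; exact h1,
      by rw [shear_key z w hw c d q]; exact h2⟩

lemma sol_shear_ncard (a b c d q : ℤ) :
    (Sol a (b - q * a) c (d - q * c)).ncard = (Sol a b c d).ncard := by
  rw [sol_shear]
  apply Set.ncard_image_of_injOn
  rintro ⟨z, w⟩ ⟨hz, hw, -, -⟩ ⟨z', w'⟩ ⟨hz', hw', -, -⟩ h
  simp only [Prod.ext_iff] at h ⊢
  obtain ⟨h1, h2⟩ := h
  subst h2
  exact ⟨mul_right_cancel₀ (zpow_ne_zero _ hw) h1, rfl⟩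

/-- Base case: lower-triangular system. -/
lemma sol_base (a c d : ℤ) (ha : a ≠ 0) (hd : d ≠ 0) :
    (Sol a 0 c d).ncard = a.natAbs * d.natAbs := by
  classical
  obtain ⟨R, hR, hRc⟩ := zpow_finset a ha 1 one_ne_zero
  choose! F hF hFc using fun z (hz : z ≠ (0:ℂ)) =>
    zpow_finset d hd (z ^ (-c)) (zpow_ne_zero _ hz)
  have hRne : ∀ z ∈ R, z ≠ (0:ℂ) := fun z hz =>
    ne_zero_of_zpow_eq ha one_ne_zero (show z ∈ ({w : ℂ | w ^ a = 1} : Set ℂ) by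
      rw [← hR]; exact hz)
  have hset : Sol a 0 c d = ↑(R.biUnion fun z => {z} ×ˢ F z) := by
    ext ⟨z, w⟩
    simp only [Sol, Set.mem_setOf_eq, Finset.coe_biUnion, Set.mem_iUnion, Finset.mem_coe,
      Finset.mem_product, Finset.mem_singleton]
    constructor
    · rintro ⟨hz, hw, h1, h2⟩
      rw [zpow_zero, mul_one] at h1
      have hzR : z ∈ R := by
        have : z ∈ ({w : ℂ | w ^ a = 1} : Set ℂ) := h1
        rwa [← hR, Finset.mem_coe] at this
      have hwd : w ^ d = z ^ (-c) := by
        have h3 := congrArg (fun x => z ^ (-c) * x) h2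
        rwa [← mul_assoc, ← zpow_add₀ hz, neg_add_cancel, zpow_zero, one_mul, mul_one] at h3
      have hwF : w ∈ F z := by
        have : w ∈ ({w : ℂ | w ^ d = z ^ (-c)} : Set ℂ) := hwd
        rwa [← hF z hz, Finset.mem_coe] at this
      exact ⟨z, hzR, rfl, hwF⟩
    · rintro ⟨z', hz', rfl, hwF⟩
      have hz : z ≠ 0 := hRne _ hz'
      have hza : z ^ a = 1 := by
        have : z ∈ ({w : ℂ | w ^ a = 1} : Set ℂ) := by
          rw [← hR]; exact hz'
        exact this
      have hwd : w ^ d = z ^ (-c) := by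
        have : w ∈ ({w : ℂ | w ^ d = z ^ (-c)} : Set ℂ) := by
          rw [← hF z hz]; exact hwF
        exact this
      refine ⟨hz, ne_zero_of_zpow_eq hd (zpow_ne_zero _ hz) hwd, ?_, ?_⟩
      · rw [zpow_zero, mul_one]; exact hza
      · rw [hwd, ← zpow_add₀ hz, add_neg_cancel, zpow_zero]
  rw [hset, Set.ncard_coe_finset]
  rw [Finset.card_biUnion]
  · rw [Finset.sum_congr rfl (fun z hz => ?_), Finset.sum_const, smul_eq_mul, hRc]
    rw [Finset.card_product, Finset.card_singleton, one_mul, hFc z (hRne z hz)]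
  · intro x hx y hy hxy
    simp only [Finset.disjoint_left, Finset.mem_product, Finset.mem_singleton]
    rintro ⟨p1, p2⟩ ⟨rfl, -⟩ ⟨h, -⟩
    exact hxy h

/-- The main count: the solution set of a nondegenerate pair of binomial equations
has `|det|` elements. -/
lemma sol_ncard : ∀ n (a b c d : ℤ), b.natAbs = n → a * d - b * c ≠ 0 →
    (Sol a b c d).ncard = (a * d - b * c).natAbs := by
  intro n
  induction n using Nat.strong_induction_on with
  | _ n ih =>
    intro a b c d hb hdet
    by_cases hb0 : b = 0
    · subst hb0
      have had : a * d - 0 * c = a * d := by ring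
      rw [had] at hdet ⊢
      have ha : a ≠ 0 := fun h => hdet (by rw [h, zero_mul])
      have hd : d ≠ 0 := fun h => hdet (by rw [h, mul_zero])
      rw [sol_base a c d ha hd, Int.natAbs_mul]
    · -- swap columns, then reduce `a` modulo `b`.
      set q : ℤ := a / b with hq
      have hmod : a % b = a - q * b := by rw [Int.emod_def, mul_comm]
      have h1 : (Sol a b c d).ncard = (Sol b (a % b) d (c - q * d)).ncard := by
        rw [hmod]
        rw [sol_shear_ncard b a d c q, sol_swap a b c d,
          Set.ncard_image_of_injective _ Prod.swap_injective]
      have hdet2 : b * (c - q * d) - (a % b) * d = -(a * d - b * c) := by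
        rw [hmod]; ring
      have hdet2' : b * (c - q * d) - (a % b) * d ≠ 0 := by
        rw [hdet2]; exact neg_ne_zero.mpr hdet
      have hlt : (a % b).natAbs < n := by
        have h0 : 0 ≤ a % b := Int.emod_nonneg a hb0
        have h2 : a % b < |b| := Int.emod_lt_abs a hb0
        rw [Int.abs_eq_natAbs] at h2
        omega
      rw [h1, ih _ hlt b (a % b) d (c - q * d) rfl hdet2', hdet2, Int.natAbs_neg]

end MikhalkinAux

open MikhalkinAux in
/-- For two nonzero non-parallel integer vectors `T₁, T₂` (i.e. with nonzero determinant),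
the number of pairs `(z₁, z₂) ∈ (ℂ^×)²` with `z₁^{T₁} = z₂^{T₂}` is exactly
`|det(T₁, T₂)|`, and the number of distinct common values `g = z₁^{T₁} = z₂^{T₂}` is
`|det(T₁,T₂)| / (ℓ(T₁) ℓ(T₂))` where `ℓ(T)` is the gcd of the coordinates of `T`. -/
theorem mikhalkin_multiplicity_count (T1 T2 : ℤ × ℤ)
    (hdet : T1.1 * T2.2 - T1.2 * T2.1 ≠ 0) :
    ({p : ℂ × ℂ | p.1 ≠ 0 ∧ p.2 ≠ 0 ∧ zpowVec p.1 T1 = zpowVec p.2 T2}).ncard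
      = (T1.1 * T2.2 - T1.2 * T2.1).natAbs ∧
    ((fun p : ℂ × ℂ => zpowVec p.1 T1) ''
        {p : ℂ × ℂ | p.1 ≠ 0 ∧ p.2 ≠ 0 ∧ zpowVec p.1 T1 = zpowVec p.2 T2}).ncard
      = (T1.1 * T2.2 - T1.2 * T2.1).natAbs /
          (Int.gcd T1.1 T1.2 * Int.gcd T2.1 T2.2) := by
  classical
  obtain ⟨a, b⟩ := T1
  obtain ⟨c, d⟩ := T2
  simp only at hdet ⊢
  set S : Set (ℂ × ℂ) :=
    {p : ℂ × ℂ | p.1 ≠ 0 ∧ p.2 ≠ 0 ∧ zpowVec p.1 (a, b) = zpowVec p.2 (c, d)} with hS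
  -- identify `S` with a `Sol` set
  have hSsol : S = Sol a (-c) b (-d) := by
    ext ⟨z, w⟩
    simp only [hS, Sol, Set.mem_setOf_eq, zpowVec, Prod.mk.injEq]
    constructor
    · rintro ⟨hz, hw, h1, h2⟩
      refine ⟨hz, hw, ?_, ?_⟩
      · rw [zpow_neg, mul_inv_eq_one₀ (zpow_ne_zero _ hw)]; exact h1
      · rw [zpow_neg, mul_inv_eq_one₀ (zpow_ne_zero _ hw)]; exact h2
    · rintro ⟨hz, hw, h1, h2⟩
      rw [zpow_neg, mul_inv_eq_one₀ (zpow_ne_zero _ hw)] at h1 h2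
      exact ⟨hz, hw, h1, h2⟩
  have hdet' : a * -d - -c * b ≠ 0 := by
    intro h
    apply hdet
    have : a * d - b * c = -(a * -d - -c * b) := by ring
    rw [this, h, neg_zero]
  have part1 : S.ncard = (a * d - b * c).natAbs := by
    rw [hSsol, sol_ncard (-c).natAbs a (-c) b (-d) rfl hdet',
      show a * -d - -c * b = -(a * d - b * c) from by ring, Int.natAbs_neg]
  refine ⟨part1, ?_⟩
  -- Part 2: count the image fiberwise.
  have hne : a ≠ 0 ∨ b ≠ 0 := by
    by_contra h
    push_neg at h
    exact hdet (by rw [h.1, h.2, zero_mul, zero_mul, sub_zero])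
  have hne2 : c ≠ 0 ∨ d ≠ 0 := by
    by_contra h
    push_neg at h
    exact hdet (by rw [h.1, h.2, mul_zero, mul_zero, sub_zero])
  set g1 : ℕ := Int.gcd a b with hg1
  set g2 : ℕ := Int.gcd c d with hg2
  have hg1p : 0 < g1 := Int.gcd_pos_iff.mpr hne
  have hg2p : 0 < g2 := Int.gcd_pos_iff.mpr hne2
  -- the set of (x,y)-roots of unity
  have unit_set : ∀ (x y : ℤ), x ≠ 0 ∨ y ≠ 0 →
      {ω : ℂ | ω ^ x = 1 ∧ ω ^ y = 1} = {ω : ℂ | ω ^ (Int.gcd x y : ℤ) = 1} := by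
    intro x y hxy
    have hg : (Int.gcd x y : ℤ) ≠ 0 := by
      simp only [ne_eq, Int.natCast_eq_zero]
      rw [Int.gcd_eq_zero_iff]
      tauto
    ext ω
    simp only [Set.mem_setOf_eq]
    constructor
    · rintro ⟨h1, h2⟩
      have hω : ω ≠ 0 := by
        rcases hxy with hx | hy
        · exact ne_zero_of_zpow_eq hx one_ne_zero h1
        · exact ne_zero_of_zpow_eq hy one_ne_zero h2
      rw [Int.gcd_eq_gcd_ab x y, zpow_add₀ hω, zpow_mul, zpow_mul, h1, h2, one_zpow,
        one_zpow, one_mul]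
    · intro h
      have hω : ω ≠ 0 := ne_zero_of_zpow_eq hg one_ne_zero h
      obtain ⟨k, hk⟩ : (Int.gcd x y : ℤ) ∣ x := Int.gcd_dvd_left x y
      obtain ⟨l, hl⟩ : (Int.gcd x y : ℤ) ∣ y := Int.gcd_dvd_right x y
      constructor
      · rw [hk, zpow_mul, h, one_zpow]
      · rw [hl, zpow_mul, h, one_zpow]
  obtain ⟨s1, hs1, hs1c⟩ := zpow_finset (g1 : ℤ) (by exact_mod_cast hg1p.ne') 1 one_ne_zero
  obtain ⟨s2, hs2, hs2c⟩ := zpow_finset (g2 : ℤ) (by exact_mod_cast hg2p.ne') 1 one_ne_zero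
  rw [Int.natAbs_natCast] at hs1c hs2c
  have hU1 : (↑s1 : Set ℂ) = {ω : ℂ | ω ^ a = 1 ∧ ω ^ b = 1} := by
    rw [hs1, unit_set a b hne]
  have hU2 : (↑s2 : Set ℂ) = {ω : ℂ | ω ^ c = 1 ∧ ω ^ d = 1} := by
    rw [hs2, unit_set c d hne2]
  -- finiteness of S
  have hfin : S.Finite := by
    apply Set.finite_of_ncard_ne_zero
    rw [part1]
    exact Int.natAbs_ne_zero.mpr hdet
  set f : ℂ × ℂ → ℂ × ℂ := fun p => zpowVec p.1 (a, b) with hf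
  have hfinI : (f '' S).Finite := hfin.image f
  set s : Finset (ℂ × ℂ) := hfin.toFinset with hsdef
  set t : Finset (ℂ × ℂ) := hfinI.toFinset with htdef
  have hmem : ∀ p ∈ s, f p ∈ t := by
    intro p hp
    rw [hsdef, Set.Finite.mem_toFinset] at hp
    rw [htdef, Set.Finite.mem_toFinset]
    exact Set.mem_image_of_mem f hp
  have hcard := Finset.card_eq_sum_card_fiberwise hmem
  -- each fiber has g1 * g2 elements
  have hfiber : ∀ p ∈ t, (s.filter fun x => f x = p).card = g1 * g2 := by
    intro p hp
    rw [htdef, Set.Finite.mem_toFinset] at hp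
    obtain ⟨⟨z1, z2⟩, hz12, rfl⟩ := hp
    obtain ⟨hz1, hz2, heq⟩ := hz12
    simp only at hz1 hz2 heq
    have heq1 : z1 ^ a = z2 ^ c := congrArg Prod.fst heq
    have heq2 : z1 ^ b = z2 ^ d := congrArg Prod.snd heq
    have hfilter : (↑(s.filter fun x => f x = f (z1, z2)) : Set (ℂ × ℂ))
        = (fun ω : ℂ × ℂ => (z1 * ω.1, z2 * ω.2)) '' ((↑s1 : Set ℂ) ×ˢ (↑s2 : Set ℂ)) := by
      ext ⟨u, v⟩
      simp only [Finset.coe_filter, Set.mem_setOf_eq, Set.mem_image, Set.mem_prod,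
        Finset.mem_coe, hsdef, Set.Finite.mem_toFinset]
      constructor
      · rintro ⟨⟨hu, hv, hSuv⟩, hfuv⟩
        simp only at hu hv hSuv
        have hfa : u ^ a = z1 ^ a := congrArg Prod.fst hfuv
        have hfb : u ^ b = z1 ^ b := congrArg Prod.snd hfuv
        have hSa : u ^ a = v ^ c := congrArg Prod.fst hSuv
        have hSb : u ^ b = v ^ d := congrArg Prod.snd hSuv
        refine ⟨(u / z1, v / z2), ⟨?_, ?_⟩, ?_⟩
        · show u / z1 ∈ s1
          rw [← Finset.mem_coe, hU1]
          constructor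
          · rw [div_zpow, hfa, div_self (zpow_ne_zero _ hz1)]
          · rw [div_zpow, hfb, div_self (zpow_ne_zero _ hz1)]
        · show v / z2 ∈ s2
          rw [← Finset.mem_coe, hU2]
          constructor
          · rw [div_zpow]
            rw [← hSa, hfa, heq1, div_self (zpow_ne_zero _ hz2)]
          · rw [div_zpow]
            rw [← hSb, hfb, heq2, div_self (zpow_ne_zero _ hz2)]
        · simp only
          rw [mul_div_cancel₀ _ hz1, mul_div_cancel₀ _ hz2]
      · rintro ⟨⟨ω1, ω2⟩, ⟨hω1, hω2⟩, him⟩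
        simp only at hω1 hω2 him
        have hω1' : ω1 ∈ ({ω : ℂ | ω ^ a = 1 ∧ ω ^ b = 1} : Set ℂ) := by
          rw [← hU1]; exact hω1
        have hω2' : ω2 ∈ ({ω : ℂ | ω ^ c = 1 ∧ ω ^ d = 1} : Set ℂ) := by
          rw [← hU2]; exact hω2
        obtain ⟨hω1a, hω1b⟩ := hω1'
        obtain ⟨hω2c, hω2d⟩ := hω2'
        have hω1ne : ω1 ≠ 0 := by
          rcases hne with hx | hy
          · exact ne_zero_of_zpow_eq hx one_ne_zero hω1a
          · exact ne_zero_of_zpow_eq hy one_ne_zero hω1b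
        have hω2ne : ω2 ≠ 0 := by
          rcases hne2 with hx | hy
          · exact ne_zero_of_zpow_eq hx one_ne_zero hω2c
          · exact ne_zero_of_zpow_eq hy one_ne_zero hω2d
        obtain ⟨rfl, rfl⟩ : z1 * ω1 = u ∧ z2 * ω2 = v := by
          simpa [Prod.ext_iff] using him
        have e1 : (z1 * ω1) ^ a = z1 ^ a := by rw [mul_zpow, hω1a, mul_one]
        have e2 : (z1 * ω1) ^ b = z1 ^ b := by rw [mul_zpow, hω1b, mul_one]
        have e3 : (z2 * ω2) ^ c = z2 ^ c := by rw [mul_zpow, hω2c, mul_one]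
        have e4 : (z2 * ω2) ^ d = z2 ^ d := by rw [mul_zpow, hω2d, mul_one]
        refine ⟨⟨mul_ne_zero hz1 hω1ne, mul_ne_zero hz2 hω2ne, ?_⟩, ?_⟩
        · show zpowVec (z1 * ω1) (a, b) = zpowVec (z2 * ω2) (c, d)
          simp only [zpowVec, Prod.mk.injEq]
          exact ⟨by rw [e1, e3, heq1], by rw [e2, e4, heq2]⟩
        · show zpowVec (z1 * ω1) (a, b) = zpowVec z1 (a, b)
          simp only [zpowVec, Prod.mk.injEq]
          exact ⟨e1, e2⟩
    have hinj : Set.InjOn (fun ω : ℂ × ℂ => (z1 * ω.1, z2 * ω.2))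
        ((↑s1 : Set ℂ) ×ˢ (↑s2 : Set ℂ)) := by
      rintro ⟨x1, x2⟩ - ⟨y1, y2⟩ - h
      simp only [Prod.ext_iff] at h ⊢
      exact ⟨mul_left_cancel₀ hz1 h.1, mul_left_cancel₀ hz2 h.2⟩
    have := congrArg Set.ncard hfilter
    rw [Set.ncard_coe_finset] at this
    rw [this, Set.ncard_image_of_injOn hinj, ← Finset.coe_product,
      Set.ncard_coe_finset, Finset.card_product, hs1c, hs2c]
  -- assemble
  have hsum : s.card = t.card * (g1 * g2) := by
    rw [hcard, Finset.sum_congr rfl hfiber, Finset.sum_const, smul_eq_mul]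
  have hScard : s.card = (a * d - b * c).natAbs := by
    rw [hsdef, ← Set.ncard_eq_toFinset_card S hfin, part1]
  have hIcard : ((fun p : ℂ × ℂ => zpowVec p.1 (a, b)) '' S).ncard = t.card := by
    rw [htdef, Set.ncard_eq_toFinset_card (f '' S) hfinI]
  rw [hIcard]
  have : (a * d - b * c).natAbs = t.card * (g1 * g2) := by rw [← hScard, hsum]
  rw [this, Nat.mul_div_cancel]
  exact Nat.mul_pos hg1p hg2p
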